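/- arXiv:2010.04235 — 2 statements merged into one kernel-verified Lean document; each statement's English description precedes it below -/
import Mathlib

section
/- (Exponential mechanism utility bound) Let u : [a,b] × datasets → ℝ be a utility function with sensitivity Δ_u, and let X be sampled from density proportional to exp(ε·u(x,S)/(2Δ_u)) on [a,b]. With OPT = max_x u(x, S) and H_t = {x ∈ [a,b] : u(x, S) > OPT - t}, we have P(u(X, S) ≤ OPT - t) ≤ ((b-a)/λ(H_{t/2})) · e^{-εt/(4Δ_u)}, where λ is Lebesgue measure. -/
open MeasureTheory Real

/-- Exponential mechanism utility bound: the probability of outputting a point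
with utility at most `OPT - t` is at most `((b-a)/λ(H_{t/2}))·e^{-εt/(4Δ)}`. -/
theorem exponential_mechanism_utility (a b ε Δ t OPT : ℝ) (u : ℝ → ℝ)
    (hab : a < b) (hΔ : 0 < Δ) (hε : 0 < ε)
    (hmeas : Measurable u)
    (hbdd : ∃ M, ∀ x ∈ Set.Icc a b, |u x| ≤ M)
    (hOPT : IsGreatest (u '' Set.Icc a b) OPT)
    (hH : 0 < (volume {x ∈ Set.Icc a b | u x > OPT - t / 2}).toReal) :
    (∫ x in {x ∈ Set.Icc a b | u x ≤ OPT - t}, Real.exp (ε * u x / (2 * Δ))) /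
        (∫ x in Set.Icc a b, Real.exp (ε * u x / (2 * Δ))) ≤
      (b - a) / (volume {x ∈ Set.Icc a b | u x > OPT - t / 2}).toReal *
        Real.exp (-(ε * t) / (4 * Δ)) := by
  obtain ⟨M, hM⟩ := hbdd
  set f : ℝ → ℝ := fun x => Real.exp (ε * u x / (2 * Δ)) with hf
  set Bad := {x ∈ Set.Icc a b | u x ≤ OPT - t} with hBadDef
  set H := {x ∈ Set.Icc a b | u x > OPT - t / 2} with hHdef
  have hBadm : MeasurableSet Bad := by
    have : Bad = Set.Icc a b ∩ u ⁻¹' Set.Iic (OPT - t) := by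
      ext x; simp [hBadDef, Set.mem_setOf_eq, and_comm]
    rw [this]; exact measurableSet_Icc.inter (hmeas measurableSet_Iic)
  have hHm : MeasurableSet H := by
    have : H = Set.Icc a b ∩ u ⁻¹' Set.Ioi (OPT - t / 2) := by
      ext x; simp [hHdef, Set.mem_setOf_eq, and_comm]
    rw [this]; exact measurableSet_Icc.inter (hmeas measurableSet_Ioi)
  have hBadsub : Bad ⊆ Set.Icc a b := fun x hx => hx.1
  have hHsub : H ⊆ Set.Icc a b := fun x hx => hx.1
  have hΔ2 : (0:ℝ) < 2 * Δ := by linarith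
  have hfm : Measurable f := (Real.measurable_exp).comp ((measurable_const.mul hmeas).div_const _)
  have hInt : IntegrableOn f (Set.Icc a b) := by
    apply Measure.integrableOn_of_bounded (M := Real.exp (ε * |M| / (2 * Δ))) (by simp)
      hfm.aestronglyMeasurable
    filter_upwards [ae_restrict_mem measurableSet_Icc] with x hx
    rw [Real.norm_eq_abs, abs_of_pos (Real.exp_pos _)]
    apply Real.exp_le_exp.2
    apply div_le_div_of_nonneg_right ?_ hΔ2.le |>.trans_eq rfl
    have := hM x hx
    nlinarith [abs_nonneg M, abs_le.1 (hM x hx), le_abs_self M]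
  have hIntBad : IntegrableOn f Bad := hInt.mono_set hBadsub
  have hIntH : IntegrableOn f H := hInt.mono_set hHsub
  have hvolBad : (volume Bad).toReal ≤ b - a := by
    have h1 : volume Bad ≤ volume (Set.Icc a b) := measure_mono hBadsub
    have h2 : volume (Set.Icc a b) = ENNReal.ofReal (b - a) := by
      rw [Real.volume_Icc]
    calc (volume Bad).toReal ≤ (volume (Set.Icc a b)).toReal :=
          ENNReal.toReal_mono (by simp [h2]) h1
      _ = b - a := by rw [h2, ENNReal.toReal_ofReal (by linarith)]
  -- numerator bound
  have hnum : (∫ x in Bad, f x) ≤ (b - a) * Real.exp (ε * (OPT - t) / (2 * Δ)) := by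
    have h1 : (∫ x in Bad, f x) ≤ ∫ _ in Bad, Real.exp (ε * (OPT - t) / (2 * Δ)) := by
      apply setIntegral_mono_on hIntBad (integrableOn_const (LT.lt.ne ?_)) hBadm
      · intro x hx
        apply Real.exp_le_exp.2
        apply div_le_div_of_nonneg_right ?_ hΔ2.le
        exact mul_le_mul_of_nonneg_left hx.2 hε.le
      · exact lt_of_le_of_lt (measure_mono hBadsub) (by rw [Real.volume_Icc]; exact ENNReal.ofReal_lt_top)
    rw [setIntegral_const, smul_eq_mul] at h1
    exact h1.trans (mul_le_mul_of_nonneg_right hvolBad (Real.exp_pos _).le)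
  -- denominator bound
  have hden : (volume H).toReal * Real.exp (ε * (OPT - t / 2) / (2 * Δ)) ≤
      ∫ x in Set.Icc a b, f x := by
    have h1 : (∫ _ in H, Real.exp (ε * (OPT - t / 2) / (2 * Δ))) ≤ ∫ x in H, f x := by
      apply setIntegral_mono_on (integrableOn_const (LT.lt.ne ?_)) hIntH hHm
      · intro x hx
        apply Real.exp_le_exp.2
        apply div_le_div_of_nonneg_right ?_ hΔ2.le
        exact mul_le_mul_of_nonneg_left hx.2.le hε.le
      · exact lt_of_le_of_lt (measure_mono hHsub) (by rw [Real.volume_Icc]; exact ENNReal.ofReal_lt_top)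
    rw [setIntegral_const, smul_eq_mul] at h1
    refine h1.trans (setIntegral_mono_set hInt ?_ (HasSubset.Subset.eventuallyLE hHsub))
    filter_upwards with x using (Real.exp_pos _).le
  have hdenpos : 0 < (volume H).toReal * Real.exp (ε * (OPT - t / 2) / (2 * Δ)) :=
    mul_pos hH (Real.exp_pos _)
  have hnum0 : 0 ≤ (b - a) * Real.exp (ε * (OPT - t) / (2 * Δ)) :=
    mul_nonneg (by linarith) (Real.exp_pos _).le
  have hmain : (∫ x in Bad, f x) / (∫ x in Set.Icc a b, f x) ≤
      ((b - a) * Real.exp (ε * (OPT - t) / (2 * Δ))) /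
      ((volume H).toReal * Real.exp (ε * (OPT - t / 2) / (2 * Δ))) :=
    div_le_div₀ hnum0 hnum hdenpos hden
  refine hmain.trans_eq ?_
  have hexp : Real.exp (ε * (OPT - t) / (2 * Δ)) =
      Real.exp (-(ε * t) / (4 * Δ)) * Real.exp (ε * (OPT - t / 2) / (2 * Δ)) := by
    rw [← Real.exp_add]
    congr 1
    field_simp
    ring
  rw [hexp]
  field_simp
end

section
/- (Duff for modes) Let S be a finite multiset over a finite set Y, with n_y the multiplicity of y in S and n_max = max_y n_y. Then for any x ∈ Y, the Duff utility for the mode statistic satisfies u_d(x, S) = n_x - n_max, i.e., the minimum edit distance (additions/removals) from S to a multiset whose (unique or tie-broken maximal) mode count is achieved at x equals n_max - n_x. -/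
open MeasureTheory Real

/-- Two datasets (finite multisets) are neighbors if one is obtained from the
other by adding or removing a single element. -/
def Neighbor {α : Type*} (S S' : Multiset α) : Prop :=
  (∃ a, S' = a ::ₘ S) ∨ (∃ a, S = a ::ₘ S')

/-- Dataset distance: the minimum length `m` of a sequence
`S = S_0, S_1, ..., S_m = S'` where consecutive datasets are neighbors. -/
noncomputable def ddist {α : Type*} (S S' : Multiset α) : ℕ :=
  sInf {m | ∃ f : ℕ → Multiset α, f 0 = S ∧ f m = S' ∧ ∀ i < m, Neighbor (f i) (f (i + 1))}

def chainSet {α : Type*} (S S' : Multiset α) : Set ℕ :=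
  {m | ∃ f : ℕ → Multiset α, f 0 = S ∧ f m = S' ∧ ∀ i < m, Neighbor (f i) (f (i + 1))}

lemma ddist_eq_sInf {α : Type*} (S S' : Multiset α) : ddist S S' = sInf (chainSet S S') := rfl

lemma chain_refl {α : Type*} (S : Multiset α) : 0 ∈ chainSet S S :=
  ⟨fun _ => S, rfl, rfl, fun i hi => absurd hi (Nat.not_lt_zero i)⟩

lemma chain_single {α : Type*} {S S' : Multiset α} (h : Neighbor S S') : 1 ∈ chainSet S S' := by
  refine ⟨fun i => if i = 0 then S else S', by simp, by simp, ?_⟩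
  intro i hi
  interval_cases i
  simpa using h

lemma chain_trans {α : Type*} {S T S' : Multiset α} {m n : ℕ}
    (hm : m ∈ chainSet S T) (hn : n ∈ chainSet T S') : m + n ∈ chainSet S S' := by
  obtain ⟨f, hf0, hfm, hf⟩ := hm
  obtain ⟨g, hg0, hgn, hg⟩ := hn
  refine ⟨fun i => if i < m then f i else g (i - m), ?_, ?_, ?_⟩
  · by_cases h : 0 < m
    · simpa [h] using hf0
    · have hm0 : m = 0 := by omega
      subst hm0
      simp [hg0, ← hfm, hf0]
  · have : ¬ (m + n < m) := by omega
    simpa [this] using hgn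
  · intro i hi
    by_cases h : i < m
    · have hFi : (if i < m then f i else g (i - m)) = f i := by simp [h]
      have hFi1 : (if i + 1 < m then f (i + 1) else g (i + 1 - m)) = f (i + 1) := by
        by_cases h' : i + 1 < m
        · simp [h']
        · have : i + 1 = m := by omega
          simp [h', this, hg0, ← hfm]
      simp only [hFi, hFi1]
      exact hf i h
    · have h1 : ¬ (i + 1 < m) := by omega
      simp only [h, h1, if_false]
      have : i + 1 - m = (i - m) + 1 := by omega
      rw [this]
      exact hg (i - m) (by omega)

lemma chain_to_zero {α : Type*} (S : Multiset α) : S.card ∈ chainSet S 0 := by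
  induction S using Multiset.induction_on with
  | empty => simpa using chain_refl (0 : Multiset α)
  | cons a S ih =>
    have h1 : 1 ∈ chainSet (a ::ₘ S) S := chain_single (Or.inr ⟨a, rfl⟩)
    have := chain_trans h1 ih
    simpa [add_comm] using this

lemma chain_from_zero {α : Type*} (S : Multiset α) : S.card ∈ chainSet 0 S := by
  induction S using Multiset.induction_on with
  | empty => simpa using chain_refl (0 : Multiset α)
  | cons a S ih =>
    have h1 : 1 ∈ chainSet S (a ::ₘ S) := chain_single (Or.inl ⟨a, rfl⟩)
    simpa using chain_trans ih h1

lemma chainSet_nonempty {α : Type*} (S S' : Multiset α) : (chainSet S S').Nonempty :=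
  ⟨S.card + S'.card, chain_trans (chain_to_zero S) (chain_from_zero S')⟩

lemma neighbor_g_le {α : Type*} [DecidableEq α] (y x : α) {T T' : Multiset α}
    (h : Neighbor T T') :
    |((T.count y : ℤ) - T.count x) - ((T'.count y : ℤ) - T'.count x)| ≤ 1 := by
  have key : ∀ (a : α) (U : Multiset α),
      |((U.count y : ℤ) - U.count x) - (((a ::ₘ U).count y : ℤ) - (a ::ₘ U).count x)| ≤ 1 := by
    intro a U
    simp only [Multiset.count_cons]
    split_ifs <;> (rw [abs_le]; push_cast; omega)
  rcases h with ⟨a, rfl⟩ | ⟨a, rfl⟩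
  · exact key a T
  · rw [abs_sub_comm]; exact key a T'

lemma chain_g_bound {α : Type*} [DecidableEq α] (y x : α) (m : ℕ) (f : ℕ → Multiset α)
    (hf : ∀ i < m, Neighbor (f i) (f (i + 1))) :
    |(((f 0).count y : ℤ) - (f 0).count x) - (((f m).count y : ℤ) - (f m).count x)| ≤ m := by
  induction m with
  | zero => simp
  | succ m ih =>
    have h1 := ih (fun i hi => hf i (by omega))
    have h2 := neighbor_g_le y x (hf m (by omega))
    calc |(((f 0).count y : ℤ) - (f 0).count x) - (((f (m+1)).count y : ℤ) - (f (m+1)).count x)|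
        ≤ |(((f 0).count y : ℤ) - (f 0).count x) - (((f m).count y : ℤ) - (f m).count x)| +
          |(((f m).count y : ℤ) - (f m).count x) - (((f (m+1)).count y : ℤ) - (f (m+1)).count x)| := by
          apply abs_sub_le
      _ ≤ m + 1 := by exact_mod_cast add_le_add h1 h2

lemma chain_replicate {α : Type*} [DecidableEq α] (x : α) (S : Multiset α) (k : ℕ) :
    k ∈ chainSet S (Multiset.replicate k x + S) := by
  induction k with
  | zero => simpa using chain_refl S
  | succ k ih =>
    have h1 : 1 ∈ chainSet (Multiset.replicate k x + S)
        (Multiset.replicate (k + 1) x + S) := by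
      have : Multiset.replicate (k + 1) x + S = x ::ₘ (Multiset.replicate k x + S) := by
        rw [Multiset.replicate_succ, Multiset.cons_add]
      rw [this]
      exact chain_single (Or.inl ⟨x, rfl⟩)
    simpa using chain_trans ih h1

/-- Duff for modes: the minimum edit distance from `S` to a multiset in which
`x` attains the maximal multiplicity equals `n_max - n_x`. -/
theorem duff_mode {Y : Type*} [Fintype Y] [DecidableEq Y] (S : Multiset Y) (x : Y) :
    sInf {m | ∃ S' : Multiset Y, ddist S S' = m ∧ ∀ y, S'.count y ≤ S'.count x} =
      (Finset.univ.sup fun y => S.count y) - S.count x := by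
  classical
  set N : ℕ := Finset.univ.sup fun y => S.count y with hN
  set k : ℕ := N - S.count x with hk
  have hxN : S.count x ≤ N := by
    rw [hN]; exact Finset.le_sup (f := fun y => S.count y) (Finset.mem_univ x)
  -- choose a maximizer y*
  have : Nonempty Y := ⟨x⟩
  obtain ⟨ystar, -, hystar⟩ :=
    Finset.exists_mem_eq_sup Finset.univ (Finset.univ_nonempty (α := Y)) fun y => S.count y
  -- lower bound: every element of the set is ≥ k
  have hlow : ∀ m ∈ {m | ∃ S' : Multiset Y, ddist S S' = m ∧ ∀ y, S'.count y ≤ S'.count x},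
      k ≤ m := by
    rintro m ⟨S', hd, hcond⟩
    have hmem : m ∈ chainSet S S' := by
      rw [← hd, ddist_eq_sInf]
      exact Nat.sInf_mem (chainSet_nonempty S S')
    obtain ⟨f, hf0, hfm, hf⟩ := hmem
    have hb := chain_g_bound ystar x m f hf
    rw [hf0, hfm] at hb
    have h1 : (S.count ystar : ℤ) = N := by
      have : S.count ystar = N := by rw [hN, hystar]
      exact_mod_cast this
    have h2 : (S'.count ystar : ℤ) ≤ S'.count x := by exact_mod_cast hcond ystar
    have habs := abs_le.mp hb
    omega
  -- upper bound witness
  set S0 : Multiset Y := Multiset.replicate k x + S with hS0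
  have hcond0 : ∀ y, S0.count y ≤ S0.count x := by
    intro y
    simp only [hS0, Multiset.count_add, Multiset.count_replicate]
    have hy : S.count y ≤ N := by
      rw [hN]; exact Finset.le_sup (f := fun y => S.count y) (Finset.mem_univ y)
    rcases eq_or_ne y x with rfl | hyx
    · simp
    · simp [hyx, Ne.symm hyx]
      omega
  have hdle : ddist S S0 ≤ k := Nat.sInf_le (chain_replicate x S k)
  have hmem0 : ddist S S0 ∈
      {m | ∃ S' : Multiset Y, ddist S S' = m ∧ ∀ y, S'.count y ≤ S'.count x} :=
    ⟨S0, rfl, hcond0⟩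
  refine le_antisymm ((Nat.sInf_le hmem0).trans hdle)
    (hlow _ (Nat.sInf_mem ⟨_, hmem0⟩))
end
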